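/- arXiv:1603.05334 — 2 statements merged into one kernel-verified Lean document; each statement's English description precedes it below -/
import Mathlib

section
/- Let (a,b) be an open real interval (endpoints possibly infinite), and let f, g : ℝ → ℝ be probability densities with respect to Lebesgue measure that are strictly positive on (a,b) and vanish outside it, with cumulative distribution functions F(x) = ∫_a^x f(y) dy and G(x) = ∫_a^x g(y) dy (so F and G are differentiable and strictly increasing on (a,b), and G⁻¹ is well-defined on (0,1)). If the likelihood ratio x ↦ f(x)/g(x) is strictly increasing on (a,b), then the ROC curve x ↦ F(G⁻¹(x)) is strictly convex on (0,1); if x ↦ f(x)/g(x) is strictly decreasing on (a,b), then x ↦ F(G⁻¹(x)) is strictly concave on (0,1). -/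
open MeasureTheory Set

lemma roc_int_aux (S : Set ℝ) (hS : S.OrdConnected) (f g : ℝ → ℝ)
    (hf_pos : ∀ x ∈ S, 0 < f x) (hg_pos : ∀ x ∈ S, 0 < g x)
    (hf_int : Integrable f) (hg_int : Integrable g)
    (hcross : ∀ x ∈ S, ∀ y ∈ S, x < y → f x * g y < f y * g x)
    {x1 x2 x3 : ℝ} (h1 : x1 ∈ S) (h2 : x2 ∈ S) (h3 : x3 ∈ S)
    (h12 : x1 < x2) (h23 : x2 < x3) :
    (∫ y in Set.Ioc x1 x2, f y) * (∫ y in Set.Ioc x2 x3, g y) <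
      (∫ y in Set.Ioc x2 x3, f y) * (∫ y in Set.Ioc x1 x2, g y) := by
  have hg2 : 0 < g x2 := hg_pos x2 h2
  set r : ℝ := f x2 / g x2 with hr
  have hsub1 : Set.Ioc x1 x2 ⊆ S := fun y hy => hS.out h1 h2 ⟨hy.1.le, hy.2⟩
  have hsub2 : Set.Ioc x2 x3 ⊆ S := fun y hy => hS.out h2 h3 ⟨hy.1.le, hy.2⟩
  -- T1, T2 positive
  have hTpos : ∀ (c d : ℝ), c < d → Set.Ioc c d ⊆ S → 0 < ∫ y in Set.Ioc c d, g y := by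
    intro c d hcd hsub
    rw [setIntegral_pos_iff_support_of_nonneg_ae]
    · refine lt_of_lt_of_le ?_ (measure_mono (Set.subset_inter
        (fun y hy => (hg_pos y (hsub hy)).ne') (subset_refl (Set.Ioc c d))))
      simp [Real.volume_Ioc, hcd]
    · refine (ae_restrict_iff' measurableSet_Ioc).2 (ae_of_all _ fun y hy => ?_)
      simpa using (hg_pos y (hsub hy)).le
    · exact hg_int.integrableOn
  have hT1 : 0 < ∫ y in Set.Ioc x1 x2, g y := hTpos _ _ h12 hsub1
  have hT2 : 0 < ∫ y in Set.Ioc x2 x3, g y := hTpos _ _ h23 hsub2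
  -- Claim A : ∫ I1 f < r * ∫ I1 g
  have hA : (∫ y in Set.Ioc x1 x2, f y) < r * ∫ y in Set.Ioc x1 x2, g y := by
    have hpos : 0 < ∫ y in Set.Ioc x1 x2, (r * g y - f y) := by
      rw [setIntegral_pos_iff_support_of_nonneg_ae]
      · refine lt_of_lt_of_le ?_ (measure_mono (show Set.Ioo x1 x2 ⊆ _ from ?_))
        · simp [Real.volume_Ioo, h12]
        · intro y hy
          have hyS : y ∈ S := hsub1 ⟨hy.1, hy.2.le⟩
          have := hcross y hyS x2 h2 hy.2
          have : f y < r * g y := by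
            rw [hr, div_mul_eq_mul_div, lt_div_iff₀ hg2]
            linarith [hcross y hyS x2 h2 hy.2]
          exact ⟨(sub_pos.2 this).ne', ⟨hy.1, hy.2.le⟩⟩
      · refine (ae_restrict_iff' measurableSet_Ioc).2 (ae_of_all _ fun y hy => ?_)
        rcases eq_or_lt_of_le hy.2 with h | h
        · subst h; simp [hr, div_mul_cancel₀ _ hg2.ne']
        · have hyS : y ∈ S := hsub1 hy
          have : f y < r * g y := by
            rw [hr, div_mul_eq_mul_div, lt_div_iff₀ hg2]
            linarith [hcross y hyS x2 h2 h]
          simpa using this.le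
      · exact ((hg_int.const_mul r).sub hf_int).integrableOn
    rw [integral_sub ((hg_int.const_mul r).integrableOn) hf_int.integrableOn,
      integral_const_mul] at hpos
    linarith
  -- Claim B : r * ∫ I2 g < ∫ I2 f
  have hB : r * (∫ y in Set.Ioc x2 x3, g y) < ∫ y in Set.Ioc x2 x3, f y := by
    have hpos : 0 < ∫ y in Set.Ioc x2 x3, (f y - r * g y) := by
      rw [setIntegral_pos_iff_support_of_nonneg_ae]
      · refine lt_of_lt_of_le ?_ (measure_mono (show Set.Ioc x2 x3 ⊆ _ from ?_))
        · simp [Real.volume_Ioc, h23]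
        · intro y hy
          have hyS : y ∈ S := hsub2 hy
          have : r * g y < f y := by
            rw [hr, div_mul_eq_mul_div, div_lt_iff₀ hg2]
            linarith [hcross x2 h2 y hyS hy.1]
          exact ⟨(sub_pos.2 this).ne', hy⟩
      · refine (ae_restrict_iff' measurableSet_Ioc).2 (ae_of_all _ fun y hy => ?_)
        have hyS : y ∈ S := hsub2 hy
        have : r * g y < f y := by
          rw [hr, div_mul_eq_mul_div, div_lt_iff₀ hg2]
          linarith [hcross x2 h2 y hyS hy.1]
        simpa using this.le
      · exact (hf_int.sub (hg_int.const_mul r)).integrableOn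
    rw [integral_sub hf_int.integrableOn ((hg_int.const_mul r).integrableOn),
      integral_const_mul] at hpos
    linarith
  calc (∫ y in Set.Ioc x1 x2, f y) * (∫ y in Set.Ioc x2 x3, g y)
      < (r * ∫ y in Set.Ioc x1 x2, g y) * (∫ y in Set.Ioc x2 x3, g y) :=
        (mul_lt_mul_of_pos_right hA hT2)
    _ = (r * ∫ y in Set.Ioc x2 x3, g y) * (∫ y in Set.Ioc x1 x2, g y) := by ring
    _ < (∫ y in Set.Ioc x2 x3, f y) * (∫ y in Set.Ioc x1 x2, g y) :=
        (mul_lt_mul_of_pos_right hB hT1)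


/-- If `f` (alternative density) and `g` (null density) are probability densities on ℝ,
supported and strictly positive exactly on an open interval `(a,b)` (endpoints possibly
infinite, encoded via `EReal`), with CDFs `F`, `G`, inverse `Ginv` of `G` on `(0,1)`,
and the likelihood ratio `f/g` is strictly increasing on `(a,b)`, then the ROC curve
`x ↦ F (Ginv x)` is strictly convex on `(0,1)`; if the likelihood ratio is strictly
decreasing, the ROC curve is strictly concave on `(0,1)`. -/
theorem stmt_0 (a b : EReal) (hab : a < b) (f g : ℝ → ℝ)
    (hf_pos : ∀ x : ℝ, a < (x : EReal) → (x : EReal) < b → 0 < f x)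
    (hg_pos : ∀ x : ℝ, a < (x : EReal) → (x : EReal) < b → 0 < g x)
    (hf_zero : ∀ x : ℝ, ¬(a < (x : EReal) ∧ (x : EReal) < b) → f x = 0)
    (hg_zero : ∀ x : ℝ, ¬(a < (x : EReal) ∧ (x : EReal) < b) → g x = 0)
    (hf_int : MeasureTheory.Integrable f) (hg_int : MeasureTheory.Integrable g)
    (hf_one : ∫ x : ℝ, f x = 1) (hg_one : ∫ x : ℝ, g x = 1)
    (F G : ℝ → ℝ)
    (hF : ∀ x : ℝ, F x = ∫ y in Set.Iic x, f y)
    (hG : ∀ x : ℝ, G x = ∫ y in Set.Iic x, g y)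
    (Ginv : ℝ → ℝ)
    (hGinv : ∀ u ∈ Set.Ioo (0 : ℝ) 1,
      a < (Ginv u : EReal) ∧ (Ginv u : EReal) < b ∧ G (Ginv u) = u) :
    (StrictMonoOn (fun x => f x / g x) {x : ℝ | a < (x : EReal) ∧ (x : EReal) < b} →
      StrictConvexOn ℝ (Set.Ioo (0 : ℝ) 1) (fun x => F (Ginv x))) ∧
    (StrictAntiOn (fun x => f x / g x) {x : ℝ | a < (x : EReal) ∧ (x : EReal) < b} →
      StrictConcaveOn ℝ (Set.Ioo (0 : ℝ) 1) (fun x => F (Ginv x))) := by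
  set S : Set ℝ := {x : ℝ | a < (x : EReal) ∧ (x : EReal) < b} with hSdef
  have hS : S.OrdConnected := by
    constructor
    intro x hx y hy z hz
    exact ⟨lt_of_lt_of_le hx.1 (EReal.coe_le_coe_iff.2 hz.1),
      lt_of_le_of_lt (EReal.coe_le_coe_iff.2 hz.2) hy.2⟩
  have hfS : ∀ x ∈ S, 0 < f x := fun x hx => hf_pos x hx.1 hx.2
  have hgS : ∀ x ∈ S, 0 < g x := fun x hx => hg_pos x hx.1 hx.2
  have hg_nn : ∀ x, 0 ≤ g x := by
    intro x
    by_cases hx : a < (x : EReal) ∧ (x : EReal) < b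
    · exact (hg_pos x hx.1 hx.2).le
    · rw [hg_zero x hx]
  have hGmono : Monotone G := by
    intro x y hxy
    rw [hG, hG]
    exact MeasureTheory.setIntegral_mono_set hg_int.integrableOn
      (MeasureTheory.ae_of_all _ hg_nn)
      (HasSubset.Subset.eventuallyLE (Set.Iic_subset_Iic.2 hxy))
  have hdiff : ∀ (h : ℝ → ℝ), MeasureTheory.Integrable h → ∀ x1 x2 : ℝ, x1 ≤ x2 →
      (∫ y in Set.Iic x2, h y) - (∫ y in Set.Iic x1, h y) = ∫ y in Set.Ioc x1 x2, h y := by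
    intro h hint x1 x2 h12
    rw [← Set.Iic_union_Ioc_eq_Iic h12,
      MeasureTheory.setIntegral_union (Set.Iic_disjoint_Ioc le_rfl) measurableSet_Ioc
        hint.integrableOn hint.integrableOn]
    ring
  have pack : ∀ u v w : ℝ, u ∈ Set.Ioo (0 : ℝ) 1 → w ∈ Set.Ioo (0 : ℝ) 1 → u < v → v < w →
      Ginv u ∈ S ∧ Ginv v ∈ S ∧ Ginv w ∈ S ∧ Ginv u < Ginv v ∧ Ginv v < Ginv w ∧
      F (Ginv v) - F (Ginv u) = (∫ y in Set.Ioc (Ginv u) (Ginv v), f y) ∧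
      F (Ginv w) - F (Ginv v) = (∫ y in Set.Ioc (Ginv v) (Ginv w), f y) ∧
      v - u = (∫ y in Set.Ioc (Ginv u) (Ginv v), g y) ∧
      w - v = (∫ y in Set.Ioc (Ginv v) (Ginv w), g y) := by
    intro u v w hu hw huv hvw
    have hv : v ∈ Set.Ioo (0 : ℝ) 1 := ⟨hu.1.trans huv, hvw.trans hw.2⟩
    obtain ⟨hu1, hu2, hGu⟩ := hGinv u hu
    obtain ⟨hv1, hv2, hGv⟩ := hGinv v hv
    obtain ⟨hw1, hw2, hGw⟩ := hGinv w hw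
    have h12 : Ginv u < Ginv v := by
      by_contra hle
      exact absurd (hGv ▸ hGu ▸ hGmono (not_lt.1 hle)) (not_le.2 huv)
    have h23 : Ginv v < Ginv w := by
      by_contra hle
      exact absurd (hGw ▸ hGv ▸ hGmono (not_lt.1 hle)) (not_le.2 hvw)
    refine ⟨⟨hu1, hu2⟩, ⟨hv1, hv2⟩, ⟨hw1, hw2⟩, h12, h23, ?_, ?_, ?_, ?_⟩
    · rw [hF, hF]; exact hdiff f hf_int _ _ h12.le
    · rw [hF, hF]; exact hdiff f hf_int _ _ h23.le
    · have h := hdiff g hg_int _ _ h12.le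
      rw [← hG, ← hG, hGu, hGv] at h; exact h
    · have h := hdiff g hg_int _ _ h23.le
      rw [← hG, ← hG, hGv, hGw] at h; exact h
  constructor
  · intro hmono
    refine strictConvexOn_of_slope_strict_mono_adjacent (convex_Ioo 0 1) ?_
    intro u v w hu hw huv hvw
    obtain ⟨h1, h2, h3, h12, h23, e1, e2, e3, e4⟩ := pack u v w hu hw huv hvw
    rw [div_lt_div_iff₀ (sub_pos.2 huv) (sub_pos.2 hvw)]
    rw [e1, e2, e3, e4]
    refine roc_int_aux S hS f g hfS hgS hf_int hg_int ?_ h1 h2 h3 h12 h23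
    intro x hx y hy hxy
    have := hmono hx hy hxy
    exact (div_lt_div_iff₀ (hgS x hx) (hgS y hy)).1 this
  · intro hanti
    refine strictConcaveOn_of_slope_strict_anti_adjacent (convex_Ioo 0 1) ?_
    intro u v w hu hw huv hvw
    obtain ⟨h1, h2, h3, h12, h23, e1, e2, e3, e4⟩ := pack u v w hu hw huv hvw
    rw [div_lt_div_iff₀ (sub_pos.2 hvw) (sub_pos.2 huv)]
    rw [e1, e2, e3, e4]
    have := roc_int_aux S hS g f hgS hfS hg_int hf_int ?_ h1 h2 h3 h12 h23
    · linarith [this]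
    · intro x hx y hy hxy
      have h := hanti hx hy hxy
      have := (div_lt_div_iff₀ (hgS y hy) (hgS x hx)).1 h
      linarith
end

section
/- For every μ < 0, the function w ↦ Φ(Φ⁻¹(w) − μ) is strictly concave on the interval (0,1). -/
open Real MeasureTheory Set Filter

/-- The standard normal cumulative distribution function. -/
noncomputable def Phi (x : ℝ) : ℝ :=
  ∫ t in Set.Iic x, (Real.sqrt (2 * Real.pi))⁻¹ * Real.exp (-t ^ 2 / 2)

/-- The inverse of the standard normal CDF, mapping (0,1) onto ℝ. -/
noncomputable def PhiInv : ℝ → ℝ := Function.invFun Phi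

noncomputable def phiPDF (x : ℝ) : ℝ := (Real.sqrt (2 * Real.pi))⁻¹ * Real.exp (-x ^ 2 / 2)

lemma phiPDF_pos (x : ℝ) : 0 < phiPDF x := by
  apply mul_pos (inv_pos.2 (Real.sqrt_pos.2 (by positivity))) (Real.exp_pos _)

lemma phiPDF_cont : Continuous phiPDF := by
  unfold phiPDF; fun_prop

lemma phiPDF_integrable : Integrable phiPDF := by
  have h : Integrable (fun x : ℝ => Real.exp (-(1/2 : ℝ) * x ^ 2)) :=
    integrable_exp_neg_mul_sq (by norm_num)
  have : phiPDF = fun x => (Real.sqrt (2 * Real.pi))⁻¹ * Real.exp (-(1/2 : ℝ) * x ^ 2) := by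
    funext x; unfold phiPDF; ring_nf
  rw [this]
  exact h.const_mul _

lemma phiPDF_integral : ∫ x, phiPDF x = 1 := by
  have h : ∫ x : ℝ, Real.exp (-(1/2 : ℝ) * x ^ 2) = Real.sqrt (Real.pi / (1/2)) :=
    integral_gaussian (1/2)
  have h2 : phiPDF = fun x => (Real.sqrt (2 * Real.pi))⁻¹ * Real.exp (-(1/2 : ℝ) * x ^ 2) := by
    funext x; unfold phiPDF; ring_nf
  rw [h2, integral_const_mul, h]
  rw [show Real.pi / (1/2) = 2 * Real.pi by ring]
  rw [inv_mul_cancel₀]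
  exact ne_of_gt (Real.sqrt_pos.2 (by positivity))

lemma hasDerivAt_Phi (x : ℝ) : HasDerivAt Phi (phiPDF x) x := by
  have hrepr : Phi = fun y => Phi 0 + ∫ t in (0:ℝ)..y, phiPDF t := by
    funext y
    have := intervalIntegral.integral_Iic_sub_Iic (f := phiPDF) (μ := volume) (a := (0:ℝ)) (b := y)
      phiPDF_integrable.integrableOn phiPDF_integrable.integrableOn
    unfold Phi phiPDF at *
    linarith [this]
  rw [hrepr]
  exact (intervalIntegral.integral_hasDerivAt_right phiPDF_integrable.intervalIntegrable
    phiPDF_cont.aestronglyMeasurable.stronglyMeasurableAtFilter phiPDF_cont.continuousAt).const_add _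

lemma Phi_strictMono : StrictMono Phi :=
  strictMono_of_deriv_pos fun x => by rw [(hasDerivAt_Phi x).deriv]; exact phiPDF_pos x

lemma Phi_continuous : Continuous Phi :=
  continuous_iff_continuousAt.2 fun x => (hasDerivAt_Phi x).continuousAt

lemma Phi_tendsto_atTop : Tendsto Phi atTop (nhds 1) := by
  have := (MeasureTheory.aecover_Iic (μ := volume) (l := atTop) (b := fun x : ℝ => x)
    tendsto_id).integral_tendsto_of_countably_generated phiPDF_integrable
  rw [phiPDF_integral] at this
  exact this

lemma Phi_tendsto_atBot : Tendsto Phi atBot (nhds 0) := by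
  have hcov := (MeasureTheory.aecover_Ioi (μ := volume) (l := atBot) (a := fun x : ℝ => x)
    tendsto_id).integral_tendsto_of_countably_generated phiPDF_integrable
  rw [phiPDF_integral] at hcov
  have hrepr : Phi = fun x => (∫ y, phiPDF y) - ∫ t in Set.Ioi x, phiPDF t := by
    funext x
    have := intervalIntegral.integral_Iic_add_Ioi (f := phiPDF) (μ := volume) (b := x)
      phiPDF_integrable.integrableOn phiPDF_integrable.integrableOn
    unfold Phi phiPDF at *
    linarith [this]
  rw [hrepr, phiPDF_integral]
  simpa using ((tendsto_const_nhds (x := (1:ℝ))).sub hcov)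

lemma Phi_mem_Ioo (x : ℝ) : Phi x ∈ Set.Ioo (0:ℝ) 1 := by
  constructor
  · have h1 : (0:ℝ) ≤ Phi (x - 1) := by
      refine le_of_tendsto Phi_tendsto_atBot ?_
      filter_upwards [eventually_le_atBot (x - 1)] with y hy
      exact Phi_strictMono.monotone hy
    linarith [Phi_strictMono (show x - 1 < x by linarith)]
  · have h1 : Phi (x + 1) ≤ 1 := by
      refine ge_of_tendsto Phi_tendsto_atTop ?_
      filter_upwards [eventually_ge_atTop (x + 1)] with y hy
      exact Phi_strictMono.monotone hy
    linarith [Phi_strictMono (show x < x + 1 by linarith)]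

lemma Phi_surj {w : ℝ} (hw : w ∈ Set.Ioo (0:ℝ) 1) : ∃ x, Phi x = w := by
  obtain ⟨a, ha⟩ : ∃ a, Phi a < w := by
    have := Phi_tendsto_atBot.eventually_lt_const hw.1
    exact this.exists
  obtain ⟨b, hb⟩ : ∃ b, w < Phi b := by
    have := Phi_tendsto_atTop.eventually_const_lt hw.2
    exact this.exists
  have hab : a ≤ b := le_of_lt (Phi_strictMono.lt_iff_lt.1 (ha.trans hb))
  have := intermediate_value_Icc hab Phi_continuous.continuousOn
  obtain ⟨x, _, hx⟩ := this ⟨le_of_lt ha, le_of_lt hb⟩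
  exact ⟨x, hx⟩

lemma Phi_PhiInv {w : ℝ} (hw : w ∈ Set.Ioo (0:ℝ) 1) : Phi (PhiInv w) = w :=
  Function.invFun_eq (Phi_surj hw)

lemma PhiInv_Phi (x : ℝ) : PhiInv (Phi x) = x :=
  Function.leftInverse_invFun Phi_strictMono.injective x

lemma PhiInv_strictMonoOn : StrictMonoOn PhiInv (Set.Ioo (0:ℝ) 1) := by
  intro a ha b hb hab
  have := Phi_strictMono.lt_iff_lt (a := PhiInv a) (b := PhiInv b)
  rw [Phi_PhiInv ha, Phi_PhiInv hb] at this
  exact this.1 hab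

lemma PhiInv_continuousAt {w : ℝ} (hw : w ∈ Set.Ioo (0:ℝ) 1) : ContinuousAt PhiInv w := by
  refine PhiInv_strictMonoOn.continuousAt_of_image_mem_nhds
    (isOpen_Ioo.mem_nhds hw) ?_
  have : PhiInv '' Set.Ioo 0 1 = Set.univ := by
    apply Set.eq_univ_of_forall
    intro x
    exact ⟨Phi x, Phi_mem_Ioo x, PhiInv_Phi x⟩
  rw [this]
  exact Filter.univ_mem

lemma hasDerivAt_PhiInv {w : ℝ} (hw : w ∈ Set.Ioo (0:ℝ) 1) :
    HasDerivAt PhiInv (phiPDF (PhiInv w))⁻¹ w := by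
  refine HasDerivAt.of_local_left_inverse (PhiInv_continuousAt hw)
    (hasDerivAt_Phi (PhiInv w)) (ne_of_gt (phiPDF_pos _)) ?_
  filter_upwards [isOpen_Ioo.mem_nhds hw] with y hy
  exact Phi_PhiInv hy

lemma ratio_eq (μ x : ℝ) :
    phiPDF (x - μ) * (phiPDF x)⁻¹ = Real.exp (μ * x - μ ^ 2 / 2) := by
  unfold phiPDF
  have hc : Real.sqrt (2 * Real.pi) ≠ 0 := ne_of_gt (Real.sqrt_pos.2 (by positivity))
  have h1 : ((Real.sqrt (2 * Real.pi))⁻¹ * Real.exp (-x ^ 2 / 2))⁻¹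
      = Real.sqrt (2 * Real.pi) * Real.exp (x ^ 2 / 2) := by
    rw [mul_inv, inv_inv, ← Real.exp_neg, neg_div, neg_neg]
  rw [h1]
  calc (Real.sqrt (2 * Real.pi))⁻¹ * Real.exp (-(x - μ) ^ 2 / 2) *
        (Real.sqrt (2 * Real.pi) * Real.exp (x ^ 2 / 2))
      = ((Real.sqrt (2 * Real.pi))⁻¹ * Real.sqrt (2 * Real.pi)) *
        (Real.exp (-(x - μ) ^ 2 / 2) * Real.exp (x ^ 2 / 2)) := by ring
    _ = Real.exp (-(x - μ) ^ 2 / 2) * Real.exp (x ^ 2 / 2) := by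
        rw [inv_mul_cancel₀ hc, one_mul]
    _ = Real.exp (μ * x - μ ^ 2 / 2) := by rw [← Real.exp_add]; congr 1; ring

lemma hasDerivAt_g (μ : ℝ) {w : ℝ} (hw : w ∈ Set.Ioo (0:ℝ) 1) :
    HasDerivAt (fun w => Phi (PhiInv w - μ)) (Real.exp (μ * PhiInv w - μ ^ 2 / 2)) w := by
  have hinner : HasDerivAt (fun w => PhiInv w - μ) (phiPDF (PhiInv w))⁻¹ w :=
    (hasDerivAt_PhiInv hw).sub_const μ
  have houter := hasDerivAt_Phi (PhiInv w - μ)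
  have := HasDerivAt.comp w houter hinner
  rw [show phiPDF (PhiInv w - μ) * (phiPDF (PhiInv w))⁻¹
      = Real.exp (μ * PhiInv w - μ ^ 2 / 2) from ratio_eq μ (PhiInv w)] at this
  exact this

/-- For every μ < 0, the function w ↦ Φ(Φ⁻¹(w) − μ) is strictly concave on (0,1). -/
theorem stmt_1 (μ : ℝ) (hμ : μ < 0) :
    StrictConcaveOn ℝ (Set.Ioo (0 : ℝ) 1) (fun w => Phi (PhiInv w - μ)) := by
  apply StrictAntiOn.strictConcaveOn_of_deriv (convex_Ioo 0 1)
  · exact fun w hw => (hasDerivAt_g μ hw).continuousAt.continuousWithinAt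
  · rw [interior_Ioo]
    intro a ha b hb hab
    rw [(hasDerivAt_g μ ha).deriv, (hasDerivAt_g μ hb).deriv]
    apply Real.exp_lt_exp.2
    have : PhiInv a < PhiInv b := PhiInv_strictMonoOn ha hb hab
    nlinarith
end
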